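/- Let σ > 2 be a real number and define φ(x) = [σ(1−x)·ln(σ(1−x)/(σ−1)) + ln(σx)]/(1 − σ(1−x)) for x near 1/σ with x ≠ 1/σ, extended by φ(1/σ) = 0. Then φ(1/σ) = 0, φ'(1/σ) = 0, and φ''(1/σ) = σ²/(σ−1). -/

import Mathlib

noncomputable def Nf (σ x : ℝ) : ℝ :=
  σ * (1 - x) * Real.log (σ * (1 - x) / (σ - 1)) + Real.log (σ * x)

noncomputable def Nf' (σ x : ℝ) : ℝ :=
  -σ * Real.log (σ * (1 - x) / (σ - 1)) - σ + 1 / x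

noncomputable def Nf'' (σ x : ℝ) : ℝ := σ / (1 - x) - 1 / x ^ 2

noncomputable def Df (σ x : ℝ) : ℝ := 1 - σ * (1 - x)

noncomputable def Gf (σ x : ℝ) : ℝ :=
  (Nf' σ x * Df σ x - Nf σ x * σ) / (Df σ x) ^ 2

lemma hasDerivAt_Nf (σ x : ℝ) (hσ : 2 < σ) (hx0 : 0 < x) (hx1 : x < 1) :
    HasDerivAt (Nf σ) (Nf' σ x) x := by
  have hσ0 : (0:ℝ) < σ := by linarith
  have h1x : (0:ℝ) < 1 - x := by linarith
  have hs1 : (0:ℝ) < σ - 1 := by linarith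
  have hu : σ * (1 - x) / (σ - 1) ≠ 0 := by positivity
  have hd1 : HasDerivAt (fun y : ℝ => σ * (1 - y) / (σ - 1)) (-σ / (σ - 1)) x := by
    have := (((hasDerivAt_id x).const_sub 1).const_mul σ).div_const (σ - 1)
    simpa using this
  have hlog1 : HasDerivAt (fun y : ℝ => Real.log (σ * (1 - y) / (σ - 1)))
      ((-σ / (σ - 1)) / (σ * (1 - x) / (σ - 1))) x := hd1.log hu
  have hd2 : HasDerivAt (fun y : ℝ => σ * (1 - y)) (-σ) x := by
    have := ((hasDerivAt_id x).const_sub 1).const_mul σ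
    simpa using this
  have hprod := hd2.mul hlog1
  have hx0' : σ * x ≠ 0 := by positivity
  have hlog2 : HasDerivAt (fun y : ℝ => Real.log (σ * y)) (σ / (σ * x)) x := by
    have := ((hasDerivAt_id x).const_mul σ).log hx0'
    simpa using this
  have := hprod.add hlog2
  refine this.congr_deriv ?_
  unfold Nf'
  field_simp
  ring

lemma hasDerivAt_Nf' (σ x : ℝ) (hσ : 2 < σ) (hx0 : 0 < x) (hx1 : x < 1) :
    HasDerivAt (Nf' σ) (Nf'' σ x) x := by
  have hσ0 : (0:ℝ) < σ := by linarith
  have h1x : (0:ℝ) < 1 - x := by linarith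
  have hs1 : (0:ℝ) < σ - 1 := by linarith
  have hu : σ * (1 - x) / (σ - 1) ≠ 0 := by positivity
  have hd1 : HasDerivAt (fun y : ℝ => σ * (1 - y) / (σ - 1)) (-σ / (σ - 1)) x := by
    have := (((hasDerivAt_id x).const_sub 1).const_mul σ).div_const (σ - 1)
    simpa using this
  have hlog1 : HasDerivAt (fun y : ℝ => Real.log (σ * (1 - y) / (σ - 1)))
      ((-σ / (σ - 1)) / (σ * (1 - x) / (σ - 1))) x := hd1.log hu
  have hinv : HasDerivAt (fun y : ℝ => 1 / y) (-(1 / x ^ 2)) x := by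
    simpa [one_div] using hasDerivAt_inv hx0.ne'
  have := ((hlog1.const_mul (-σ)).sub_const σ).add hinv
  refine this.congr_deriv ?_
  unfold Nf''
  field_simp
  ring

lemma hasDerivAt_Df (σ x : ℝ) : HasDerivAt (Df σ) σ x := by
  have := ((hasDerivAt_id x).const_sub 1).const_mul σ |>.const_sub 1
  simp at this; exact this

lemma Df_ne (σ x : ℝ) (hσ : 2 < σ) (hx : x < 1 / 2) : Df σ x ≠ 0 := by
  have : σ * (1 - x) > σ * (1 / 2) := by
    apply mul_lt_mul_of_pos_left (by linarith) (by linarith)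
  have : Df σ x < 0 := by unfold Df; nlinarith
  linarith

lemma hasDerivAt_G (σ x : ℝ) (hσ : 2 < σ) (hx0 : 0 < x) (hx1 : x < 1 / 2) :
    HasDerivAt (fun y => Nf σ y / Df σ y) (Gf σ x) x :=
  (hasDerivAt_Nf σ x hσ hx0 (by linarith)).div (hasDerivAt_Df σ x) (Df_ne σ x hσ hx1)

lemma Nf_at (σ : ℝ) (hσ : 2 < σ) : Nf σ (1 / σ) = 0 := by
  have hσ0 : (0:ℝ) < σ := by linarith
  have h1 : σ * (1 - 1 / σ) = σ - 1 := by field_simp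
  have h2 : σ * (1 / σ) = 1 := by field_simp
  rw [Nf, h1, h2, div_self (by linarith : σ - 1 ≠ 0), Real.log_one]
  ring

lemma Nf'_at (σ : ℝ) (hσ : 2 < σ) : Nf' σ (1 / σ) = 0 := by
  have hσ0 : (0:ℝ) < σ := by linarith
  have h1 : σ * (1 - 1 / σ) = σ - 1 := by field_simp
  rw [Nf', h1, div_self (by linarith : σ - 1 ≠ 0), Real.log_one]
  field_simp
  ring

/-- Second-order vanishing of `φ` at `1/σ`: for `σ > 2`, the function
`φ(x) = (σ(1-x)·ln(σ(1-x)/(σ-1)) + ln(σx))/(1 - σ(1-x))` for `x ≠ 1/σ`,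
extended by `φ(1/σ) = 0`, satisfies `φ(1/σ) = 0`, `φ'(1/σ) = 0` and
`φ''(1/σ) = σ²/(σ-1)`. -/
theorem phi_second_order_expansion_at_inv_sigma (σ : ℝ) (hσ : 2 < σ) :
    (fun x : ℝ => if x = 1 / σ then 0 else
        (σ * (1 - x) * Real.log (σ * (1 - x) / (σ - 1)) + Real.log (σ * x))
          / (1 - σ * (1 - x))) (1 / σ) = 0
    ∧ deriv (fun x : ℝ => if x = 1 / σ then 0 else
        (σ * (1 - x) * Real.log (σ * (1 - x) / (σ - 1)) + Real.log (σ * x))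
          / (1 - σ * (1 - x))) (1 / σ) = 0
    ∧ deriv (deriv (fun x : ℝ => if x = 1 / σ then 0 else
        (σ * (1 - x) * Real.log (σ * (1 - x) / (σ - 1)) + Real.log (σ * x))
          / (1 - σ * (1 - x)))) (1 / σ) = σ ^ 2 / (σ - 1) := by
  have hσ0 : (0:ℝ) < σ := by linarith
  have ha0 : (0:ℝ) < 1 / σ := by positivity
  have ha2 : (1:ℝ) / σ < 1 / 2 := by
    rw [div_lt_div_iff₀ hσ0 (by norm_num)]; linarith
  have hfg : (fun x : ℝ => if x = 1 / σ then 0 else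
        (σ * (1 - x) * Real.log (σ * (1 - x) / (σ - 1)) + Real.log (σ * x))
          / (1 - σ * (1 - x))) = fun x => Nf σ x / Df σ x := by
    funext x
    by_cases h : x = 1 / σ
    · subst h
      rw [if_pos rfl, Nf_at σ hσ, zero_div]
    · simp only [if_neg h, Nf, Df]
  rw [hfg]
  refine ⟨?_, ?_, ?_⟩
  · show Nf σ (1/σ) / Df σ (1/σ) = 0
    rw [Nf_at σ hσ, zero_div]
  · rw [(hasDerivAt_G σ (1/σ) hσ ha0 ha2).deriv]
    rw [Gf, Nf_at σ hσ, Nf'_at σ hσ]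
    simp
  · -- second derivative
    have hev : deriv (fun x => Nf σ x / Df σ x) =ᶠ[nhds (1/σ)] Gf σ := by
      filter_upwards [Ioo_mem_nhds ha0 ha2] with x hx
      exact (hasDerivAt_G σ x hσ hx.1 hx.2).deriv
    rw [hev.deriv_eq]
    -- derivative of Gf at 1/σ
    have hN := hasDerivAt_Nf σ (1/σ) hσ ha0 (by linarith)
    have hN' := hasDerivAt_Nf' σ (1/σ) hσ ha0 (by linarith)
    have hD := hasDerivAt_Df σ (1/σ)
    have hDne := Df_ne σ (1/σ) hσ ha2
    have hP : HasDerivAt (fun x => Nf' σ x * Df σ x - Nf σ x * σ)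
        (Nf'' σ (1/σ) * Df σ (1/σ) + Nf' σ (1/σ) * σ - Nf' σ (1/σ) * σ)
        (1/σ) := (hN'.mul hD).sub (hN.mul_const σ)
    have hD2 : HasDerivAt (fun x => (Df σ x) ^ 2) (2 * Df σ (1/σ) ^ 1 * σ) (1/σ) := by
      exact hD.pow 2
    have hG := hP.div hD2 (pow_ne_zero 2 hDne)
    rw [show Gf σ = fun x => (Nf' σ x * Df σ x - Nf σ x * σ) / (Df σ x) ^ 2 from rfl]
    rw [HasDerivAt.deriv (f := fun x => (Nf' σ x * Df σ x - Nf σ x * σ) / Df σ x ^ 2) hG]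
    rw [Nf_at σ hσ, Nf'_at σ hσ]
    have hDval : Df σ (1/σ) = 2 - σ := by
      rw [Df]; field_simp; ring
    have hN''val : Nf'' σ (1/σ) = σ^2 / (σ - 1) - σ^2 := by
      rw [Nf'']
      have h1 : (1:ℝ) - 1/σ = (σ - 1)/σ := by field_simp
      rw [h1]
      field_simp
    rw [hDval, hN''val]
    have h2σ : (2:ℝ) - σ ≠ 0 := by linarith
    have hs1 : σ - 1 ≠ 0 := by intro h; linarith [hσ]
    field_simp
    ring
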